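/- Let V be a finite-dimensional real inner product space, let w₁,…,w_k ∈ V be linearly independent, W = span(w₁,…,w_k), and let v ∈ V. Then the norm of the orthogonal projection of v onto the orthogonal complement of W equals ‖v ∧ w₁ ∧ ⋯ ∧ w_k‖ / ‖w₁ ∧ ⋯ ∧ w_k‖, where the norms on exterior powers are those induced by the inner product. -/

import Mathlib

open scoped RealInnerProductSpace
open Matrix

/-- The Gram determinant `det (⟪u i, u' j⟫)`, which computes the inner product of the
wedge products `u 0 ∧ ⋯ ∧ u (m-1)` and `u' 0 ∧ ⋯ ∧ u' (m-1)` for the inner product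
induced on the exterior power. -/
noncomputable def gramDet {V : Type*} [NormedAddCommGroup V] [InnerProductSpace ℝ V]
    {m : ℕ} (u u' : Fin m → V) : ℝ :=
  (Matrix.of fun i j => (⟪u i, u' j⟫ : ℝ)).det

lemma gram_posDef {V : Type*} [NormedAddCommGroup V] [InnerProductSpace ℝ V]
    {m : ℕ} (u : Fin m → V) (hu : LinearIndependent ℝ u) :
    (Matrix.of fun i j => (⟪u i, u j⟫ : ℝ)).PosDef := by
  rw [Matrix.posDef_iff_dotProduct_mulVec]
  constructor
  · ext i j
    simp [Matrix.conjTranspose_apply, real_inner_comm]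
  · intro x hx
    have key : dotProduct (star x) ((Matrix.of fun i j => (⟪u i, u j⟫ : ℝ)) *ᵥ x)
        = ⟪∑ i, x i • u i, ∑ j, x j • u j⟫ := by
      simp [dotProduct, Matrix.mulVec, sum_inner, inner_sum,
        real_inner_smul_left, real_inner_smul_right, Finset.mul_sum, mul_comm, mul_assoc,
        mul_left_comm]
      rw [← real_inner_self_eq_norm_sq]
      simp only [sum_inner, inner_sum, real_inner_smul_left, real_inner_smul_right]
      exact Finset.sum_congr rfl fun i _ => Finset.sum_congr rfl fun j _ => by
        rw [real_inner_comm]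
    rw [key]
    rw [real_inner_self_eq_norm_sq]
    apply pow_pos
    rw [norm_pos_iff]
    intro h
    exact hx (funext fun i => Fintype.linearIndependent_iff.mp hu x h i)

theorem stmt_4 {V : Type*} [NormedAddCommGroup V] [InnerProductSpace ℝ V]
    [FiniteDimensional ℝ V] {k : ℕ} (w : Fin k → V) (hw : LinearIndependent ℝ w)
    (W : Submodule ℝ V) (hW : W = Submodule.span ℝ (Set.range w)) (v : V) :
    ‖(Submodule.orthogonalProjectionOnto Wᗮ v : V)‖
      = Real.sqrt (gramDet (Fin.cons v w) (Fin.cons v w)) / Real.sqrt (gramDet w w) := by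
  set p : V := (Submodule.orthogonalProjectionOnto W v : V) with hp
  set q : V := (Submodule.orthogonalProjectionOnto Wᗮ v : V) with hq
  have hv : v = p + q := (Submodule.starProjection_add_starProjection_orthogonal (K := W) v).symm
  have hwW : ∀ i, w i ∈ W := fun i => hW ▸ Submodule.subset_span ⟨i, rfl⟩
  have hqW : ∀ x ∈ W, ⟪x, q⟫ = 0 := fun x hx =>
    (Submodule.mem_orthogonal W q).mp (SetLike.coe_mem _) x hx
  have hpW : p ∈ W := SetLike.coe_mem _
  have hpq : ⟪p, q⟫ = 0 := hqW p hpW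
  set c : ℝ := ‖q‖ ^ 2 with hc
  set M₀ : Matrix (Fin (k+1)) (Fin (k+1)) ℝ :=
    Matrix.of fun (i j : Fin (k+1)) => (⟪(Fin.cons p w : Fin (k+1) → V) i, (Fin.cons p w : Fin (k+1) → V) j⟫ : ℝ) with hM₀
  set d : ℝ := gramDet w w with hd
  have hdpos : 0 < d := (gram_posDef w hw).det_pos
  -- the Gram matrix of (v, w) as an updateRow of M₀
  have key : (Matrix.of fun i j => (⟪(Fin.cons v w : Fin (k+1) → V) i, (Fin.cons v w : Fin (k+1) → V) j⟫ : ℝ))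
      = M₀.updateRow 0 (M₀ 0 + Pi.single 0 c) := by
    ext i j
    rcases Fin.eq_zero_or_eq_succ i with rfl | ⟨i', rfl⟩
    · rcases Fin.eq_zero_or_eq_succ j with rfl | ⟨j', rfl⟩
      · have h0 : ⟪q, p⟫ = (0:ℝ) := by rw [real_inner_comm]; exact hpq
        simp [hM₀, hv, inner_add_left, inner_add_right, hpq, h0,
          real_inner_self_eq_norm_sq, hc, norm_add_sq_real]
      · have h1 : ⟪q, w j'⟫ = 0 := by rw [real_inner_comm]; exact hqW _ (hwW j')
        simp [hM₀, hv, inner_add_left, h1, Fin.succ_ne_zero]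
    · rcases Fin.eq_zero_or_eq_succ j with rfl | ⟨j', rfl⟩
      · have h1 : ⟪w i', q⟫ = 0 := hqW _ (hwW i')
        simp [hM₀, hv, inner_add_right, h1, Fin.succ_ne_zero,
          Matrix.updateRow_apply]
      · simp [hM₀, Fin.succ_ne_zero, Matrix.updateRow_apply]
  -- det M₀ = 0 since p ∈ span w
  obtain ⟨cf, hcf⟩ := (Submodule.mem_span_range_iff_exists_fun ℝ).mp (hW ▸ hpW)
  have hrow : M₀ 0 = ∑ l, (Fin.cons 0 cf : Fin (k+1) → ℝ) l • M₀ l := by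
    funext j
    have : M₀ 0 j = ⟪∑ i, cf i • w i, (Fin.cons p w : Fin (k+1) → V) j⟫ := by rw [hcf]; simp [hM₀]
    rw [this]
    simp [sum_inner, real_inner_smul_left, Fin.sum_univ_succ, hM₀]
  have hM₀det : M₀.det = 0 := by
    have h := Matrix.det_updateRow_sum M₀ 0 (Fin.cons 0 cf)
    rw [← hrow, Matrix.updateRow_eq_self] at h
    simpa using h
  -- the single-entry part
  have h2 : (M₀.updateRow 0 (Pi.single 0 c)).det = c * d := by
    have hsingle : (Pi.single (0 : Fin (k+1)) c : Fin (k+1) → ℝ)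
        = c • (Pi.single 0 1 : Fin (k+1) → ℝ) := by
      funext j
      rcases eq_or_ne j 0 with rfl | hj
      · simp
      · simp [Pi.single_apply, hj]
    rw [hsingle, Matrix.det_updateRow_smul]
    congr 1
    rw [Matrix.det_succ_row_zero]
    rw [Finset.sum_eq_single 0]
    · simp [hd, gramDet, hM₀]
      congr 1
    · intro j _ hj
      simp [Matrix.updateRow_apply, Pi.single_apply, hj]
    · simp
  have hgram : gramDet (Fin.cons v w) (Fin.cons v w) = c * d := by
    rw [gramDet, key, Matrix.det_updateRow_add, Matrix.updateRow_eq_self, hM₀det, zero_add, h2]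
  rw [hgram, Real.sqrt_mul (sq_nonneg _), Real.sqrt_sq (norm_nonneg q),
    mul_div_assoc, div_self (Real.sqrt_pos.mpr hdpos).ne', mul_one]
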